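/- Let G be a group and A₀ ⊇ A₁ ⊇ A₂ ⊇ ⋯ a descending chain of subgroups such that the index [Aᵢ : Aᵢ₊₁] is infinite for infinitely many i. Then the inverse limit A = lim A₀/Aᵢ of the discrete coset spaces A₀/Aᵢ (with the natural projections as bonding maps), topologized as a subspace of the product, is a nonempty completely metrizable topological space in which every compact subset has empty interior; consequently, A is not the union of countably many compact subsets. -/

import Mathlib

namespace ChainLimit

variable {G : Type} [Group G]

/-- The coset space `A₀/Aᵢ`. -/
def CosetSp (A : ℕ → Subgroup G) (i : ℕ) : Type :=
  ↥(A 0) ⧸ (A i).subgroupOf (A 0)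

/-- The coset spaces `A₀/Aᵢ` carry the discrete topology. -/
instance (A : ℕ → Subgroup G) (i : ℕ) : TopologicalSpace (CosetSp A i) := ⊥

instance (A : ℕ → Subgroup G) (i : ℕ) : DiscreteTopology (CosetSp A i) := ⟨rfl⟩

/-- The natural projection `A₀/Aᵢ₊₁ → A₀/Aᵢ`. -/
def proj (A : ℕ → Subgroup G) (hA : ∀ i, A (i + 1) ≤ A i) (i : ℕ) :
    CosetSp A (i + 1) → CosetSp A i :=
  Quotient.map' id (fun a b hab => by
    rw [QuotientGroup.leftRel_apply] at hab ⊢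
    rw [Subgroup.mem_subgroupOf] at hab ⊢
    exact hA i hab)

/-- The inverse limit `A = lim A₀/Aᵢ` of the discrete coset spaces, topologized as a
subspace of the product. -/
def LimCosets (A : ℕ → Subgroup G) (hA : ∀ i, A (i + 1) ≤ A i) : Type :=
  {c : ∀ i, CosetSp A i // ∀ i, proj A hA i (c (i + 1)) = c i}

instance (A : ℕ → Subgroup G) (hA : ∀ i, A (i + 1) ≤ A i) :
    TopologicalSpace (LimCosets A hA) :=
  instTopologicalSpaceSubtype

section
variable (A : ℕ → Subgroup G) (hA : ∀ i, A (i + 1) ≤ A i)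

include hA in
lemma chain_le : ∀ i j, i ≤ j → A j ≤ A i := fun i j h =>
  Nat.le_induction le_rfl (fun k _ ih => (hA k).trans ih) j h

/-- diagonal thread -/
def diag (g : ↥(A 0)) : LimCosets A hA :=
  ⟨fun _ => QuotientGroup.mk g, fun _ => rfl⟩

lemma diag_coord (g : ↥(A 0)) (i : ℕ) : (diag A hA g).1 i = QuotientGroup.mk g := rfl

lemma eq_of_coord_eq (x y : LimCosets A hA) {i j : ℕ} (hij : i ≤ j)
    (h : x.1 j = y.1 j) : x.1 i = y.1 i := by
  revert h
  induction j, hij using Nat.le_induction with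
  | base => exact fun h => h
  | succ j hj ih => exact fun h => ih (by rw [← x.2 j, ← y.2 j, h])


variable (A : ℕ → Subgroup G) (hA : ∀ i, A (i + 1) ≤ A i)

noncomputable def limMetric : MetricSpace (LimCosets A hA) :=
  letI : MetricSpace (∀ i, CosetSp A i) := PiNat.metricSpace
  Subtype.metricSpace

lemma limMetric_topology :
    (limMetric A hA).toUniformSpace.toTopologicalSpace =
      (inferInstance : TopologicalSpace (LimCosets A hA)) := rfl

lemma isClosed_threads :
    IsClosed {c : ∀ i, CosetSp A i | ∀ i, proj A hA i (c (i + 1)) = c i} := by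
  have : {c : ∀ i, CosetSp A i | ∀ i, proj A hA i (c (i + 1)) = c i} =
      ⋂ i, {c : ∀ i, CosetSp A i | proj A hA i (c (i + 1)) = c i} := by
    ext c; simp [Set.mem_iInter]
  rw [this]
  refine isClosed_iInter fun i => isClosed_eq ?_ (continuous_apply i)
  exact (continuous_of_discreteTopology).comp (continuous_apply (i + 1))

lemma limMetric_complete :
    @CompleteSpace (LimCosets A hA) (limMetric A hA).toUniformSpace := by
  letI : MetricSpace (∀ i, CosetSp A i) := PiNat.metricSpace
  haveI : CompleteSpace (∀ i, CosetSp A i) := PiNat.completeSpace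
  exact (isClosed_threads A hA).completeSpace_coe


lemma cylinder_subset_of_mem_interior {K : Set (LimCosets A hA)} {x : LimCosets A hA}
    (hx : x ∈ interior K) :
    ∃ m : ℕ, {y : LimCosets A hA | y.1 m = x.1 m} ⊆ K := by
  obtain ⟨W, hW, hWe⟩ := isOpen_induced_iff.1 (isOpen_interior (s := K))
  have hxW : x.1 ∈ W := by rw [← hWe] at hx; exact hx
  obtain ⟨I, u, h1, h2⟩ := isOpen_pi_iff.1 hW x.1 hxW
  refine ⟨I.sup id, fun y hy => ?_⟩
  have hyW : y.1 ∈ W := by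
    apply h2
    intro i hi
    have : y.1 i = x.1 i :=
      eq_of_coord_eq A hA y x (Finset.le_sup (f := id) hi) hy
    rw [this]
    exact (h1 i hi).2
  have : y ∈ interior K := by rw [← hWe]; exact hyW
  exact interior_subset this

lemma compact_interior_empty
    (hinf : {i : ℕ | Infinite (↥(A i) ⧸ (A (i + 1)).subgroupOf (A i))}.Infinite)
    (K : Set (LimCosets A hA)) (hK : IsCompact K) : interior K = ∅ := by
  by_contra h
  obtain ⟨x, hx⟩ := Set.nonempty_iff_ne_empty.2 h
  obtain ⟨m, hm⟩ := cylinder_subset_of_mem_interior A hA hx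
  obtain ⟨n, hnmem, hmn⟩ := hinf.exists_gt m
  haveI : Infinite (↥(A n) ⧸ (A (n + 1)).subgroupOf (A n)) := hnmem
  set g0 : ↥(A 0) := Quotient.out (x.1 n) with hg0
  have hg0eq : (Quotient.mk'' g0 : CosetSp A n) = x.1 n := Quotient.out_eq' _
  -- the lift of an element of A n into A 0
  let lift : ↥(A n) → ↥(A 0) := fun h => ⟨(h : G), chain_le A hA 0 n (Nat.zero_le n) h.2⟩
  let f : ↥(A n) → LimCosets A hA := fun h => diag A hA (g0 * lift h)
  -- f h agrees with x at coordinate n, hence at coordinate m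
  have hfn : ∀ h : ↥(A n), (f h).1 n = x.1 n := by
    intro h
    rw [← hg0eq]
    apply Quotient.sound'
    rw [QuotientGroup.leftRel_apply, Subgroup.mem_subgroupOf]
    have : ((g0 * lift h)⁻¹ * g0 : ↥(A 0)) = (lift h)⁻¹ := by group
    rw [this]
    exact (A n).inv_mem h.2
  have hfm : ∀ h : ↥(A n), f h ∈ K := fun h =>
    hm (eq_of_coord_eq A hA (f h) x (Nat.le_of_lt hmn) (hfn h))
  -- the map on the quotient, evaluated at coordinate n+1, is injective
  let F : (↥(A n) ⧸ (A (n + 1)).subgroupOf (A n)) → CosetSp A (n + 1) :=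
    fun q => (f (Quotient.out q)).1 (n + 1)
  have hFinj : Function.Injective F := by
    intro q1 q2 hq
    have h12 : (QuotientGroup.mk (g0 * lift (Quotient.out q1)) : CosetSp A (n + 1)) =
        QuotientGroup.mk (g0 * lift (Quotient.out q2)) := hq
    rw [QuotientGroup.eq] at h12
    rw [Subgroup.mem_subgroupOf] at h12
    have hcalc : ((g0 * lift (Quotient.out q1))⁻¹ * (g0 * lift (Quotient.out q2)) : ↥(A 0)) =
        (lift (Quotient.out q1))⁻¹ * lift (Quotient.out q2) := by group
    rw [hcalc] at h12
    rw [← Quotient.out_eq' q1, ← Quotient.out_eq' q2]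
    apply Quotient.sound'
    rw [QuotientGroup.leftRel_apply, Subgroup.mem_subgroupOf]
    exact h12
  -- conclude
  have hsub : Set.range F ⊆ (fun y : LimCosets A hA => y.1 (n + 1)) '' K := by
    rintro _ ⟨q, rfl⟩
    exact ⟨f (Quotient.out q), hfm _, rfl⟩
  have hfin : ((fun y : LimCosets A hA => y.1 (n + 1)) '' K).Finite :=
    (hK.image ((continuous_apply (n + 1)).comp continuous_subtype_val)).finite
      ⟨by infer_instance⟩
  exact (Set.infinite_range_of_injective hFinj) (hfin.subset hsub)


end

end ChainLimit

open ChainLimit in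
/-- If `A₀ ⊇ A₁ ⊇ ⋯` is a descending chain of subgroups of a group such that the
index `[Aᵢ : Aᵢ₊₁]` is infinite for infinitely many `i`, then `A = lim A₀/Aᵢ` is a
nonempty completely metrizable topological space in which every compact subset has
empty interior; consequently `A` is not the union of countably many compact
subsets. -/
theorem limCosets_nonempty_completelyMetrizable_compact_empty_interior
    {G : Type} [Group G] (A : ℕ → Subgroup G) (hA : ∀ i, A (i + 1) ≤ A i)
    (hinf : {i : ℕ | Infinite (↥(A i) ⧸ (A (i + 1)).subgroupOf (A i))}.Infinite) :
    Nonempty (LimCosets A hA) ∧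
    (∃ m : MetricSpace (LimCosets A hA),
      m.toPseudoMetricSpace.toUniformSpace.toTopologicalSpace =
        (inferInstance : TopologicalSpace (LimCosets A hA)) ∧
      @CompleteSpace (LimCosets A hA) m.toPseudoMetricSpace.toUniformSpace) ∧
    (∀ K : Set (LimCosets A hA), IsCompact K → interior K = ∅) ∧
    ¬∃ f : ℕ → Set (LimCosets A hA),
      (∀ n, IsCompact (f n)) ∧ (⋃ n, f n) = Set.univ := by
  refine ⟨⟨diag A hA 1⟩,
    ⟨limMetric A hA, limMetric_topology A hA, limMetric_complete A hA⟩,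
    compact_interior_empty A hA hinf, ?_⟩
  rintro ⟨f, hfc, hfU⟩
  haveI hB : BaireSpace (LimCosets A hA) := by
    letI := limMetric A hA
    haveI := limMetric_complete A hA
    show @BaireSpace _ (limMetric A hA).toUniformSpace.toTopologicalSpace
    infer_instance
  haveI : Nonempty (LimCosets A hA) := ⟨diag A hA 1⟩
  haveI : T2Space (LimCosets A hA) := by
    letI := limMetric A hA
    show @T2Space _ (limMetric A hA).toUniformSpace.toTopologicalSpace
    infer_instance
  have hcl : ∀ n, IsClosed (f n) := fun n => (hfc n).isClosed
  obtain ⟨n, hn⟩ := nonempty_interior_of_iUnion_of_closed hcl hfU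
  rw [compact_interior_empty A hA hinf (f n) (hfc n)] at hn
  exact Set.not_nonempty_empty hn
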